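/- Let u, v be nonzero vectors in R^d and Σ positive definite with largest eigenvalue λ_max. Then the operator norm of the Hessian of u ↦ cos_Σ(u,v) is at most (2/√3) · λ_max/‖u‖_Σ². -/

import Mathlib

open Matrix RealInnerProductSpace

variable {d : ℕ}

/-- `Σ`-inner product on Euclidean space. -/
noncomputable def sInner (S : Matrix (Fin d) (Fin d) ℝ)
    (x y : EuclideanSpace ℝ (Fin d)) : ℝ :=
  ⟪x, Matrix.toEuclideanLin S y⟫

/-- `Σ`-norm on Euclidean space. -/
noncomputable def sNorm (S : Matrix (Fin d) (Fin d) ℝ)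
    (x : EuclideanSpace ℝ (Fin d)) : ℝ :=
  Real.sqrt (sInner S x x)

/-- `Σ`-cosine similarity on Euclidean space. -/
noncomputable def sCos (S : Matrix (Fin d) (Fin d) ℝ)
    (u v : EuclideanSpace ℝ (Fin d)) : ℝ :=
  sInner S u v / (sNorm S u * sNorm S v)


local notation "E" => EuclideanSpace ℝ (Fin d)


lemma sqrt43 : Real.sqrt (4/3) = 2 / Real.sqrt 3 := by
  rw [show (4:ℝ)/3 = (2/Real.sqrt 3)^2 by
    rw [div_pow, Real.sq_sqrt (by norm_num : (3:ℝ) ≥ 0)]; norm_num]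
  exact Real.sqrt_sq (by positivity)

lemma one_le_c : (1:ℝ) ≤ 2 / Real.sqrt 3 := by
  rw [le_div_iff₀ (by positivity), one_mul]
  nlinarith [Real.sq_sqrt (by norm_num : (3:ℝ) ≥ 0), Real.sqrt_nonneg 3]

lemma subA (s t a b a' b' : ℝ) (h : s^2 + t^2 ≤ 1) :
    (s*(a*b' + a'*b) + t*(b*b'))^2 ≤ (4/3)*((a^2+b^2)*(a'^2+b'^2)) := by
  have h1 : (s*(a*b' + a'*b) + t*(b*b'))^2 ≤ (a*b'+a'*b)^2 + (b*b')^2 := by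
    nlinarith [sq_nonneg (s*(b*b') - t*(a*b'+a'*b)), sq_nonneg (a*b'+a'*b), sq_nonneg (b*b')]
  nlinarith [sq_nonneg (2*a*a' - b*b'), sq_nonneg (a*b' - a'*b)]

lemma subA' (s t a b a' b' : ℝ) (h : s^2 + t^2 ≤ 1) :
    |s*(a*b' + a'*b) + t*(b*b')| ≤ (2/Real.sqrt 3) * (Real.sqrt (a^2+b^2) * Real.sqrt (a'^2+b'^2)) := by
  have h2 := subA s t a b a' b' h
  calc |s*(a*b' + a'*b) + t*(b*b')| = Real.sqrt ((s*(a*b' + a'*b) + t*(b*b'))^2) := by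
        rw [Real.sqrt_sq_eq_abs]
    _ ≤ Real.sqrt ((4/3)*((a^2+b^2)*(a'^2+b'^2))) := Real.sqrt_le_sqrt h2
    _ = (2/Real.sqrt 3) * (Real.sqrt (a^2+b^2) * Real.sqrt (a'^2+b'^2)) := by
        rw [Real.sqrt_mul (by norm_num), Real.sqrt_mul (by positivity), sqrt43]

lemma subB (α β α' β' : ℝ) :
    α*α' + β*β' ≤ Real.sqrt (α^2+β^2) * Real.sqrt (α'^2+β'^2) := by
  rcases le_or_gt (α*α' + β*β') 0 with h | h
  · exact h.trans (by positivity)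
  · rw [← Real.sqrt_mul (by positivity)]
    rw [show α*α' + β*β' = Real.sqrt ((α*α' + β*β')^2) from (Real.sqrt_sq h.le).symm]
    apply Real.sqrt_le_sqrt
    nlinarith [sq_nonneg (α*β' - α'*β)]

lemma expand2 (x e p r : E) (hx : ⟪x,x⟫ = 1) (he : ⟪e,e⟫ = 1) (hxe : ⟪x,e⟫ = 0) :
    ⟪p,r⟫ = ⟪x,p⟫*⟪x,r⟫ + ⟪e,p⟫*⟪e,r⟫ +
      ⟪p - ⟪x,p⟫•x - ⟪e,p⟫•e, r - ⟪x,r⟫•x - ⟪e,r⟫•e⟫ := by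
  have hex : ⟪e,x⟫ = 0 := by rw [real_inner_comm]; exact hxe
  simp only [inner_sub_left, inner_sub_right, real_inner_smul_left, real_inner_smul_right,
    hx, he, hxe, hex]
  ring_nf
  rw [real_inner_comm r x, real_inner_comm r e, real_inner_comm p x, real_inner_comm p e]
  ring

lemma keyineq (x y p r : E) (hx : ‖x‖ = 1) (hy : ‖y‖ = 1) :
    |⟪y,r⟫*⟪x,p⟫ + ⟪y,p⟫*⟪x,r⟫ + ⟪x,y⟫*⟪p,r⟫ - 3*(⟪x,y⟫*(⟪x,r⟫*⟪x,p⟫))|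
      ≤ 2/Real.sqrt 3 * (‖p‖*‖r‖) := by
  have hxx : ⟪x,x⟫ = 1 := by
    rw [real_inner_self_eq_norm_sq, hx]; norm_num
  set t : ℝ := ⟪x,y⟫ with ht
  have htle : |t| ≤ 1 := by
    have := abs_real_inner_le_norm x y
    rwa [hx, hy, one_mul] at this
  by_cases hcol : y - t • x = 0
  · -- y = t • x
    have hyt : y = t • x := by rwa [sub_eq_zero] at hcol
    have hyr : ∀ z : E, ⟪y,z⟫ = t * ⟪x,z⟫ := fun z => by rw [hyt, real_inner_smul_left]
    have hkey : ⟪y,r⟫*⟪x,p⟫ + ⟪y,p⟫*⟪x,r⟫ + t*⟪p,r⟫ - 3*(t*(⟪x,r⟫*⟪x,p⟫))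
        = t * ⟪p - ⟪x,p⟫•x, r - ⟪x,r⟫•x⟫ := by
      rw [hyr r, hyr p]
      simp only [inner_sub_left, inner_sub_right, real_inner_smul_left, real_inner_smul_right, hxx]
      rw [real_inner_comm p x, real_inner_comm r x]
      ring
    rw [hkey, abs_mul]
    have hnp : ‖p - ⟪x,p⟫•x‖ ≤ ‖p‖ := by
      have h2 : ‖p - ⟪x,p⟫•x‖^2 ≤ ‖p‖^2 := by
        rw [← real_inner_self_eq_norm_sq, ← real_inner_self_eq_norm_sq]
        simp only [inner_sub_left, inner_sub_right, real_inner_smul_left, real_inner_smul_right, hxx]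
        rw [real_inner_comm p x]
        nlinarith [sq_nonneg (⟪x,p⟫)]
      calc ‖p - ⟪x,p⟫•x‖ = Real.sqrt (‖p - ⟪x,p⟫•x‖^2) := (Real.sqrt_sq (norm_nonneg _)).symm
        _ ≤ Real.sqrt (‖p‖^2) := Real.sqrt_le_sqrt h2
        _ = ‖p‖ := Real.sqrt_sq (norm_nonneg _)
    have hnr : ‖r - ⟪x,r⟫•x‖ ≤ ‖r‖ := by
      have h2 : ‖r - ⟪x,r⟫•x‖^2 ≤ ‖r‖^2 := by
        rw [← real_inner_self_eq_norm_sq, ← real_inner_self_eq_norm_sq]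
        simp only [inner_sub_left, inner_sub_right, real_inner_smul_left, real_inner_smul_right, hxx]
        rw [real_inner_comm r x]
        nlinarith [sq_nonneg (⟪x,r⟫)]
      calc ‖r - ⟪x,r⟫•x‖ = Real.sqrt (‖r - ⟪x,r⟫•x‖^2) := (Real.sqrt_sq (norm_nonneg _)).symm
        _ ≤ Real.sqrt (‖r‖^2) := Real.sqrt_le_sqrt h2
        _ = ‖r‖ := Real.sqrt_sq (norm_nonneg _)
    have hin : |⟪p - ⟪x,p⟫•x, r - ⟪x,r⟫•x⟫| ≤ ‖p‖ * ‖r‖ :=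
      (abs_real_inner_le_norm _ _).trans (mul_le_mul hnp hnr (norm_nonneg _) (norm_nonneg _))
    calc |t| * |⟪p - ⟪x,p⟫•x, r - ⟪x,r⟫•x⟫| ≤ 1 * (‖p‖*‖r‖) := by
          apply mul_le_mul htle hin (abs_nonneg _) (by norm_num)
      _ ≤ 2/Real.sqrt 3 * (‖p‖*‖r‖) := by
          apply mul_le_mul_of_nonneg_right one_le_c (by positivity)
  · -- general position
    set s : ℝ := ‖y - t•x‖ with hs
    have hspos : 0 < s := by
      rw [hs]; exact norm_pos_iff.mpr hcol
    set e : E := s⁻¹ • (y - t•x) with he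
    have hee : ⟪e,e⟫ = 1 := by
      rw [he, real_inner_smul_left, real_inner_smul_right, real_inner_self_eq_norm_sq, ← hs]
      field_simp
    have hxy1 : ⟪x, y - t•x⟫ = 0 := by
      rw [inner_sub_right, real_inner_smul_right, hxx]; ring
    have hxe : ⟪x,e⟫ = 0 := by rw [he, real_inner_smul_right, hxy1, mul_zero]
    have hyy : ⟪y,y⟫ = 1 := by rw [real_inner_self_eq_norm_sq, hy]; norm_num
    have hst : s^2 + t^2 = 1 := by
      have h0 : s^2 = ⟪y - t•x, y - t•x⟫ := by
        rw [real_inner_self_eq_norm_sq]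
      have hyx : ⟪y,x⟫ = t := by rw [real_inner_comm]
      simp only [inner_sub_left, inner_sub_right, real_inner_smul_left, real_inner_smul_right,
        hxx, hyy, hyx] at h0
      ring_nf at h0 ⊢
      linarith
    have hy2 : y = t•x + s•e := by
      rw [he, smul_smul, mul_inv_cancel₀ hspos.ne', one_smul]; abel
    have hyz : ∀ z : E, ⟪y,z⟫ = t*⟪x,z⟫ + s*⟪e,z⟫ := fun z => by
      rw [hy2, inner_add_left, real_inner_smul_left, real_inner_smul_left]
    set a : ℝ := ⟪x,p⟫
    set b : ℝ := ⟪e,p⟫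
    set a' : ℝ := ⟪x,r⟫
    set b' : ℝ := ⟪e,r⟫
    set p₃ : E := p - a•x - b•e with hp₃
    set r₃ : E := r - a'•x - b'•e with hr₃
    have hpr := expand2 x e p r hxx hee hxe
    have hpp := expand2 x e p p hxx hee hxe
    have hrr := expand2 x e r r hxx hee hxe
    have hkey : ⟪y,r⟫*a + ⟪y,p⟫*a' + t*⟪p,r⟫ - 3*(t*(a'*a))
        = (s*(a*b'+a'*b) + t*(b*b')) + t*⟪p₃,r₃⟫ := by
      rw [hyz r, hyz p, hpr]; ring
    have hP3 : ‖p₃‖^2 = ‖p‖^2 - a^2 - b^2 := by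
      have : ⟪p₃,p₃⟫ = ⟪p,p⟫ - a^2 - b^2 := by rw [hpp]; ring
      rw [← real_inner_self_eq_norm_sq, ← real_inner_self_eq_norm_sq, this]
    have hR3 : ‖r₃‖^2 = ‖r‖^2 - a'^2 - b'^2 := by
      have : ⟪r₃,r₃⟫ = ⟪r,r⟫ - a'^2 - b'^2 := by rw [hrr]; ring
      rw [← real_inner_self_eq_norm_sq, ← real_inner_self_eq_norm_sq, this]
    have hA2 : a^2 + b^2 ≤ ‖p‖^2 := by linarith only [hP3, sq_nonneg ‖p₃‖]
    have hB2 : a'^2 + b'^2 ≤ ‖r‖^2 := by linarith only [hR3, sq_nonneg ‖r₃‖]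
    have h1 : |s*(a*b'+a'*b) + t*(b*b')| ≤
        2/Real.sqrt 3 * (Real.sqrt (a^2+b^2) * Real.sqrt (a'^2+b'^2)) :=
      subA' s t a b a' b' (le_of_eq hst)
    have h2 : |t*⟪p₃,r₃⟫| ≤ ‖p₃‖ * ‖r₃‖ := by
      rw [abs_mul]
      calc |t| * |⟪p₃,r₃⟫| ≤ 1 * (‖p₃‖*‖r₃‖) :=
            mul_le_mul htle (abs_real_inner_le_norm _ _) (abs_nonneg _) (by norm_num)
        _ = ‖p₃‖*‖r₃‖ := one_mul _
    have h3 : ‖p₃‖ = Real.sqrt (‖p‖^2 - a^2 - b^2) := by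
      rw [← hP3, Real.sqrt_sq (norm_nonneg _)]
    have h4 : ‖r₃‖ = Real.sqrt (‖r‖^2 - a'^2 - b'^2) := by
      rw [← hR3, Real.sqrt_sq (norm_nonneg _)]
    have h5 : Real.sqrt (a^2+b^2) * Real.sqrt (a'^2+b'^2) + ‖p₃‖*‖r₃‖ ≤ ‖p‖ * ‖r‖ := by
      rw [h3, h4]
      have := subB (Real.sqrt (a^2+b^2)) (Real.sqrt (‖p‖^2 - a^2 - b^2))
        (Real.sqrt (a'^2+b'^2)) (Real.sqrt (‖r‖^2 - a'^2 - b'^2))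
      rw [Real.sq_sqrt (show (0:ℝ) ≤ a^2+b^2 by positivity),
        Real.sq_sqrt (show (0:ℝ) ≤ ‖p‖^2 - a^2 - b^2 by linarith),
        Real.sq_sqrt (show (0:ℝ) ≤ a'^2+b'^2 by positivity),
        Real.sq_sqrt (show (0:ℝ) ≤ ‖r‖^2 - a'^2 - b'^2 by linarith)] at this
      calc _ ≤ _ := this
        _ = ‖p‖ * ‖r‖ := by
          rw [show a^2+b^2 + (‖p‖^2 - a^2 - b^2) = ‖p‖^2 by ring,
              show a'^2+b'^2 + (‖r‖^2 - a'^2 - b'^2) = ‖r‖^2 by ring,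
              Real.sqrt_sq (norm_nonneg _), Real.sqrt_sq (norm_nonneg _)]
    calc |⟪y,r⟫*a + ⟪y,p⟫*a' + t*⟪p,r⟫ - 3*(t*(a'*a))|
        = |(s*(a*b'+a'*b) + t*(b*b')) + t*⟪p₃,r₃⟫| := by rw [hkey]
      _ ≤ |s*(a*b'+a'*b) + t*(b*b')| + |t*⟪p₃,r₃⟫| := abs_add_le _ _
      _ ≤ 2/Real.sqrt 3 * (Real.sqrt (a^2+b^2) * Real.sqrt (a'^2+b'^2)) + ‖p₃‖*‖r₃‖ :=
          add_le_add h1 h2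
      _ ≤ 2/Real.sqrt 3 * (Real.sqrt (a^2+b^2) * Real.sqrt (a'^2+b'^2)) +
          2/Real.sqrt 3 * (‖p₃‖*‖r₃‖) :=
          add_le_add_right (le_mul_of_one_le_left (mul_nonneg (norm_nonneg _) (norm_nonneg _)) one_le_c) _
      _ = 2/Real.sqrt 3 * (Real.sqrt (a^2+b^2) * Real.sqrt (a'^2+b'^2) + ‖p₃‖*‖r₃‖) := by ring
      _ ≤ 2/Real.sqrt 3 * (‖p‖*‖r‖) := by
          apply mul_le_mul_of_nonneg_left h5 (by positivity)

noncomputable def AL (S : Matrix (Fin d) (Fin d) ℝ) : E →L[ℝ] E :=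
  LinearMap.toContinuousLinearMap (Matrix.toEuclideanLin S)

lemma AL_mul (A B : Matrix (Fin d) (Fin d) ℝ) (x : E) :
    AL (A*B) x = AL A (AL B x) := by
  simp [AL, Matrix.toEuclideanLin_apply]

lemma hasFDerivAt_q (S : Matrix (Fin d) (Fin d) ℝ)
    (hsym : ∀ x y : E, ⟪AL S x, y⟫ = ⟪x, AL S y⟫) (w : E) :
    HasFDerivAt (fun z : E => ⟪z, AL S z⟫) ((2:ℝ) • innerSL ℝ (AL S w)) w := by
  have h := (hasFDerivAt_id w).inner ℝ ((AL S).hasFDerivAt (x := w))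
  refine h.congr_fderiv ?_
  ext k
  simp only [ContinuousLinearMap.coe_smul', Pi.smul_apply,
    innerSL_apply_apply, fderivInnerCLM_apply, ContinuousLinearMap.comp_apply,
    ContinuousLinearMap.prod_apply, ContinuousLinearMap.coe_id', id_eq, smul_eq_mul]
  rw [← hsym w k, real_inner_comm k (AL S w)]; ring

lemma myHasFDerivAt_div {F : Type*} [NormedAddCommGroup F] [NormedSpace ℝ F]
    {f g : F → ℝ} {f' g' : F →L[ℝ] ℝ} {x : F}
    (hf : HasFDerivAt f f' x) (hg : HasFDerivAt g g' x) (hx : g x ≠ 0) :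
    HasFDerivAt (fun y => f y / g y) ((g x)⁻¹ • f' - (f x / (g x)^2) • g') x := by
  have hinv : HasFDerivAt (fun y => (g y)⁻¹) ((-((g x) ^ 2)⁻¹) • g') x := by
    have h2 := (hasFDerivAt_inv (𝕜 := ℝ) hx).comp x hg
    have heq : (-((g x) ^ 2)⁻¹) • g'
        = (ContinuousLinearMap.smulRight (1 : ℝ →L[ℝ] ℝ) (-(g x ^ 2)⁻¹)).comp g' := by
      ext k; simp; ring
    rw [heq]
    exact h2
  have h3 := hf.mul hinv
  have heq2 : (g x)⁻¹ • f' - (f x / (g x)^2) • g'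
      = f x • ((-((g x) ^ 2)⁻¹) • g') + (g x)⁻¹ • f' := by
    ext k
    simp
    field_simp
    ring
  rw [heq2]
  simp only [div_eq_mul_inv]
  exact h3

noncomputable def KC (S : Matrix (Fin d) (Fin d) ℝ) : E →L[ℝ] (E →L[ℝ] ℝ) :=
  LinearMap.toContinuousLinearMap
  { toFun := fun w => innerSL ℝ (AL S w)
    map_add' := by intro a b; ext k; simp [inner_add_left]
    map_smul' := by intro c a; ext k; simp [inner_smul_left] }

@[simp] lemma KC_apply (S : Matrix (Fin d) (Fin d) ℝ) (w k : E) :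
    KC S w k = ⟪AL S w, k⟫ := rfl

noncomputable def Dmap (S : Matrix (Fin d) (Fin d) ℝ) (v : E) : E → (E →L[ℝ] ℝ) := fun w =>
  (Real.sqrt ⟪w, AL S w⟫ * Real.sqrt ⟪v, AL S v⟫)⁻¹ • innerSL ℝ (AL S v)
    - (⟪w, AL S v⟫ / (Real.sqrt ⟪v, AL S v⟫ * Real.sqrt ⟪w, AL S w⟫ ^ 3)) • KC S w

lemma sCos_eq (S : Matrix (Fin d) (Fin d) ℝ) (v : E) :
    (fun z : E => sCos S z v) =
      fun z : E => ⟪z, AL S v⟫ / (Real.sqrt ⟪z, AL S z⟫ * Real.sqrt ⟪v, AL S v⟫) := rfl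

lemma hasFDerivAt_sCos (S : Matrix (Fin d) (Fin d) ℝ)
    (hsym : ∀ x y : E, ⟪AL S x, y⟫ = ⟪x, AL S y⟫)
    (hpos : ∀ z : E, z ≠ 0 → 0 < ⟪z, AL S z⟫)
    (v : E) (hv : v ≠ 0) (w : E) (hw : w ≠ 0) :
    HasFDerivAt (fun z : E => sCos S z v) (Dmap S v w) w := by
  have hqw : 0 < ⟪w, AL S w⟫ := hpos w hw
  have hqv : 0 < ⟪v, AL S v⟫ := hpos v hv
  have hrw : 0 < Real.sqrt ⟪w, AL S w⟫ := Real.sqrt_pos.mpr hqw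
  have hrv : 0 < Real.sqrt ⟪v, AL S v⟫ := Real.sqrt_pos.mpr hqv
  have hnum : HasFDerivAt (fun z : E => ⟪z, AL S v⟫) (innerSL ℝ (AL S v)) w := by
    have heq : (fun z : E => ⟪z, AL S v⟫) = fun z : E => (innerSL ℝ (AL S v)) z :=
      funext fun z => by rw [innerSL_apply_apply, real_inner_comm]
    rw [heq]
    exact (innerSL ℝ (AL S v)).hasFDerivAt
  have hden : HasFDerivAt (fun z : E => Real.sqrt ⟪z, AL S z⟫ * Real.sqrt ⟪v, AL S v⟫)
      (Real.sqrt ⟪v, AL S v⟫ • ((1 / (2 * Real.sqrt ⟪w, AL S w⟫)) •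
        ((2:ℝ) • innerSL ℝ (AL S w)))) w :=
    ((hasFDerivAt_q S hsym w).sqrt hqw.ne').mul_const _
  have h := myHasFDerivAt_div hnum hden (by positivity)
  rw [sCos_eq]
  have heq2 : Dmap S v w = (Real.sqrt ⟪w, AL S w⟫ * Real.sqrt ⟪v, AL S v⟫)⁻¹ • innerSL ℝ (AL S v)
      - (⟪w, AL S v⟫ / (Real.sqrt ⟪w, AL S w⟫ * Real.sqrt ⟪v, AL S v⟫)^2) •
        (Real.sqrt ⟪v, AL S v⟫ • ((1 / (2 * Real.sqrt ⟪w, AL S w⟫)) •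
        ((2:ℝ) • innerSL ℝ (AL S w)))) := by
    ext k
    simp only [Dmap, ContinuousLinearMap.coe_sub', Pi.sub_apply, ContinuousLinearMap.coe_smul',
      Pi.smul_apply, innerSL_apply_apply, KC_apply, smul_eq_mul]
    set qw : ℝ := ⟪w, AL S w⟫ with hqw'
    set qv : ℝ := ⟪v, AL S v⟫ with hqv'
    set A : ℝ := ⟪AL S v, k⟫
    set B : ℝ := ⟪AL S w, k⟫
    set X : ℝ := ⟪w, AL S v⟫
    set sw : ℝ := Real.sqrt qw with hsw'
    set sv : ℝ := Real.sqrt qv with hsv'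
    have hsw : sw ≠ 0 := hrw.ne'
    have hsv : sv ≠ 0 := hrv.ne'
    field_simp
  rw [heq2]
  exact h

lemma myHasFDerivAt_inv {F : Type*} [NormedAddCommGroup F] [NormedSpace ℝ F]
    {g : F → ℝ} {g' : F →L[ℝ] ℝ} {x : F}
    (hg : HasFDerivAt g g' x) (hx : g x ≠ 0) :
    HasFDerivAt (fun y => (g y)⁻¹) ((-((g x) ^ 2)⁻¹) • g') x := by
  have h2 := (hasFDerivAt_inv (𝕜 := ℝ) hx).comp x hg
  have heq : (-((g x) ^ 2)⁻¹) • g'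
      = (ContinuousLinearMap.smulRight (1 : ℝ →L[ℝ] ℝ) (-(g x ^ 2)⁻¹)).comp g' := by
    ext k; simp; ring
  rw [heq]
  exact h2

lemma hasFDerivAt_linpart (S : Matrix (Fin d) (Fin d) ℝ) (v w : E) :
    HasFDerivAt (fun z : E => ⟪z, AL S v⟫) (innerSL ℝ (AL S v)) w := by
  have heq : (fun z : E => ⟪z, AL S v⟫) = fun z : E => (innerSL ℝ (AL S v)) z :=
    funext fun z => by rw [innerSL_apply_apply, real_inner_comm]
  rw [heq]
  exact (innerSL ℝ (AL S v)).hasFDerivAt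

lemma hasFDerivAt_Dmap (S : Matrix (Fin d) (Fin d) ℝ)
    (hsym : ∀ x y : E, ⟪AL S x, y⟫ = ⟪x, AL S y⟫)
    (hpos : ∀ z : E, z ≠ 0 → 0 < ⟪z, AL S z⟫)
    (v : E) (hv : v ≠ 0) (u : E) (hu : u ≠ 0) :
    ∃ H : E →L[ℝ] (E →L[ℝ] ℝ), HasFDerivAt (Dmap S v) H u ∧ ∀ h k : E, H h k =
      (3*⟪u,AL S v⟫*⟪AL S u,h⟫*⟪AL S u,k⟫ / ⟪u,AL S u⟫
        - (⟪AL S u,h⟫*⟪AL S v,k⟫ + ⟪AL S v,h⟫*⟪AL S u,k⟫ + ⟪u,AL S v⟫*⟪AL S h,k⟫))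
        / (Real.sqrt ⟪v,AL S v⟫ * Real.sqrt ⟪u,AL S u⟫ ^ 3) := by
  have hqu : 0 < ⟪u, AL S u⟫ := hpos u hu
  have hqv : 0 < ⟪v, AL S v⟫ := hpos v hv
  have hru : 0 < Real.sqrt ⟪u, AL S u⟫ := Real.sqrt_pos.mpr hqu
  have hrv : 0 < Real.sqrt ⟪v, AL S v⟫ := Real.sqrt_pos.mpr hqv
  have hr : HasFDerivAt (fun w : E => Real.sqrt ⟪w, AL S w⟫)
      ((1/(2*Real.sqrt ⟪u,AL S u⟫)) • ((2:ℝ) • innerSL ℝ (AL S u))) u :=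
    (hasFDerivAt_q S hsym u).sqrt hqu.ne'
  have hφ := myHasFDerivAt_inv (hr.mul_const (Real.sqrt ⟪v, AL S v⟫)) (by positivity)
  have hr3 : HasFDerivAt (fun w : E => Real.sqrt ⟪v,AL S v⟫ * Real.sqrt ⟪w,AL S w⟫^3)
      ((Real.sqrt ⟪v,AL S v⟫ : ℝ) •
        ((Real.sqrt ⟪u,AL S u⟫ * Real.sqrt ⟪u,AL S u⟫) •
            ((1/(2*Real.sqrt ⟪u,AL S u⟫)) • ((2:ℝ) • innerSL ℝ (AL S u))) +
          Real.sqrt ⟪u,AL S u⟫ •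
            (Real.sqrt ⟪u,AL S u⟫ • ((1/(2*Real.sqrt ⟪u,AL S u⟫)) • ((2:ℝ) • innerSL ℝ (AL S u))) +
             Real.sqrt ⟪u,AL S u⟫ • ((1/(2*Real.sqrt ⟪u,AL S u⟫)) • ((2:ℝ) • innerSL ℝ (AL S u)))))) u := by
    have heqf : (fun w : E => Real.sqrt ⟪v,AL S v⟫ * Real.sqrt ⟪w,AL S w⟫^3)
        = fun w : E => Real.sqrt ⟪v,AL S v⟫ *
            (Real.sqrt ⟪w,AL S w⟫ * Real.sqrt ⟪w,AL S w⟫ * Real.sqrt ⟪w,AL S w⟫) :=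
      funext fun w => by ring
    rw [heqf]
    exact ((hr.mul hr).mul hr).const_mul _
  have hψ := myHasFDerivAt_div (hasFDerivAt_linpart S v u) hr3 (by positivity)
  have hD2 := hψ.smul ((KC S).hasFDerivAt (x := u))
  have hD1 := hφ.smul_const (innerSL ℝ (AL S v))
  refine ⟨_, hD1.sub hD2, ?_⟩
  intro h k
  simp only [ContinuousLinearMap.coe_sub', Pi.sub_apply, ContinuousLinearMap.add_apply,
    ContinuousLinearMap.smulRight_apply, ContinuousLinearMap.coe_smul', Pi.smul_apply,
    ContinuousLinearMap.smul_apply, innerSL_apply_apply, KC_apply, smul_eq_mul]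
  set qu : ℝ := ⟪u, AL S u⟫ with hqu'
  set qv : ℝ := ⟪v, AL S v⟫ with hqv'
  set auh : ℝ := ⟪AL S u, h⟫
  set avh : ℝ := ⟪AL S v, h⟫
  set auk : ℝ := ⟪AL S u, k⟫
  set avk : ℝ := ⟪AL S v, k⟫
  set xuv : ℝ := ⟪u, AL S v⟫
  set ahk : ℝ := ⟪AL S h, k⟫
  have e1 : Real.sqrt qu * Real.sqrt qu = qu := Real.mul_self_sqrt hqu.le
  set sw : ℝ := Real.sqrt qu with hsw'
  set sv : ℝ := Real.sqrt qv with hsv'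
  have hsw : sw ≠ 0 := hru.ne'
  have hsv : sv ≠ 0 := hrv.ne'
  rw [← e1]
  field_simp
  ring

open scoped MatrixOrder in
lemma scalar_bound (S : Matrix (Fin d) (Fin d) ℝ) (hS : S.PosDef) (lmax : ℝ)
    (hmax : ∀ x : E, ⟪x, AL S x⟫ ≤ lmax * ‖x‖^2)
    (u v h k : E) (hu : u ≠ 0) (hv : v ≠ 0) :
    |(3*⟪u,AL S v⟫*⟪AL S u,h⟫*⟪AL S u,k⟫ / ⟪u,AL S u⟫
      - (⟪AL S u,h⟫*⟪AL S v,k⟫ + ⟪AL S v,h⟫*⟪AL S u,k⟫ + ⟪u,AL S v⟫*⟪AL S h,k⟫))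
      / (Real.sqrt ⟪v,AL S v⟫ * Real.sqrt ⟪u,AL S u⟫ ^ 3)|
    ≤ 2/Real.sqrt 3 * lmax / ⟪u,AL S u⟫ * (‖h‖ * ‖k‖) := by
  have hsym : ∀ x y : E, ⟪AL S x, y⟫ = ⟪x, AL S y⟫ :=
    fun x y => (Matrix.isHermitian_iff_isSymmetric.mp hS.1) x y
  have hpos : ∀ z : E, z ≠ 0 → 0 < ⟪z, AL S z⟫ := by
    intro z hz
    have h0 : ⟪z, AL S z⟫ = dotProduct (star (WithLp.equiv 2 _ z)) (S *ᵥ (WithLp.equiv 2 _ z)) := by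
      simp [AL, Matrix.toEuclideanLin_apply, PiLp.inner_apply, dotProduct, mulVec, mul_comm]
    rw [h0]
    exact hS.dotProduct_mulVec_pos (by simpa using hz)
  set RL : E →L[ℝ] E := AL (CFC.sqrt S) with hRL
  have hRsym : ∀ x y : E, ⟪RL x, y⟫ = ⟪x, RL y⟫ :=
    fun x y => (Matrix.isHermitian_iff_isSymmetric.mp (CFC.sqrt_nonneg S).posSemidef.1) x y
  have hRLRL : ∀ z : E, AL S z = RL (RL z) := by
    intro z
    have := AL_mul (d := d) (CFC.sqrt S) (CFC.sqrt S) z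
    rw [CFC.sqrt_mul_sqrt_self S hS.posSemidef.nonneg] at this
    exact this
  have htrans : ∀ a b : E, ⟪a, AL S b⟫ = ⟪RL a, RL b⟫ := by
    intro a b
    rw [hRLRL b, ← hRsym a (RL b)]
  have hnormsq : ∀ a : E, ‖RL a‖^2 = ⟪a, AL S a⟫ := by
    intro a
    rw [htrans a a, real_inner_self_eq_norm_sq]
  have hqu : 0 < ⟪u, AL S u⟫ := hpos u hu
  have hqv : 0 < ⟪v, AL S v⟫ := hpos v hv
  have hru : 0 < Real.sqrt ⟪u, AL S u⟫ := Real.sqrt_pos.mpr hqu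
  have hrv : 0 < Real.sqrt ⟪v, AL S v⟫ := Real.sqrt_pos.mpr hqv
  have hlm : 0 < lmax := by
    have h1 := hmax u
    have h2 : (0:ℝ) < ‖u‖^2 := by
      have := norm_pos_iff.mpr hu
      positivity
    nlinarith
  have hRLu : ‖RL u‖ = Real.sqrt ⟪u, AL S u⟫ := by
    rw [← hnormsq u, Real.sqrt_sq (norm_nonneg _)]
  have hRLv : ‖RL v‖ = Real.sqrt ⟪v, AL S v⟫ := by
    rw [← hnormsq v, Real.sqrt_sq (norm_nonneg _)]
  set x : E := (Real.sqrt ⟪u, AL S u⟫)⁻¹ • RL u with hx'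
  set y : E := (Real.sqrt ⟪v, AL S v⟫)⁻¹ • RL v with hy'
  have hx : ‖x‖ = 1 := by
    rw [hx', norm_smul, Real.norm_eq_abs, abs_inv, abs_of_pos hru, hRLu]
    exact inv_mul_cancel₀ hru.ne'
  have hy : ‖y‖ = 1 := by
    rw [hy', norm_smul, Real.norm_eq_abs, abs_inv, abs_of_pos hrv, hRLv]
    exact inv_mul_cancel₀ hrv.ne'
  have key := keyineq x y (RL h) (RL k) hx hy
  have k1 : ⟪y, RL k⟫ = (Real.sqrt ⟪v,AL S v⟫)⁻¹ * ⟪AL S v, k⟫ := by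
    rw [hy', real_inner_smul_left, ← htrans v k, hsym v k]
  have k4 : ⟪y, RL h⟫ = (Real.sqrt ⟪v,AL S v⟫)⁻¹ * ⟪AL S v, h⟫ := by
    rw [hy', real_inner_smul_left, ← htrans v h, hsym v h]
  have k2 : ⟪x, RL h⟫ = (Real.sqrt ⟪u,AL S u⟫)⁻¹ * ⟪AL S u, h⟫ := by
    rw [hx', real_inner_smul_left, ← htrans u h, hsym u h]
  have k3 : ⟪x, RL k⟫ = (Real.sqrt ⟪u,AL S u⟫)⁻¹ * ⟪AL S u, k⟫ := by
    rw [hx', real_inner_smul_left, ← htrans u k, hsym u k]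
  have k5 : ⟪x, y⟫ = (Real.sqrt ⟪u,AL S u⟫)⁻¹ * ((Real.sqrt ⟪v,AL S v⟫)⁻¹ * ⟪u,AL S v⟫) := by
    rw [hx', hy', real_inner_smul_left, real_inner_smul_right, ← htrans u v]
  have k6 : ⟪RL h, RL k⟫ = ⟪AL S h, k⟫ := by
    rw [← htrans h k, hsym h k]
  rw [k1, k2, k3, k4, k5, k6] at key
  have hnh : ‖RL h‖ ≤ Real.sqrt lmax * ‖h‖ := by
    have h1 : ‖RL h‖^2 ≤ lmax * ‖h‖^2 := by rw [hnormsq h]; exact hmax h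
    calc ‖RL h‖ = Real.sqrt (‖RL h‖^2) := (Real.sqrt_sq (norm_nonneg _)).symm
      _ ≤ Real.sqrt (lmax * ‖h‖^2) := Real.sqrt_le_sqrt h1
      _ = Real.sqrt lmax * ‖h‖ := by
          rw [Real.sqrt_mul hlm.le, Real.sqrt_sq (norm_nonneg _)]
  have hnk : ‖RL k‖ ≤ Real.sqrt lmax * ‖k‖ := by
    have h1 : ‖RL k‖^2 ≤ lmax * ‖k‖^2 := by rw [hnormsq k]; exact hmax k
    calc ‖RL k‖ = Real.sqrt (‖RL k‖^2) := (Real.sqrt_sq (norm_nonneg _)).symm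
      _ ≤ Real.sqrt (lmax * ‖k‖^2) := Real.sqrt_le_sqrt h1
      _ = Real.sqrt lmax * ‖k‖ := by
          rw [Real.sqrt_mul hlm.le, Real.sqrt_sq (norm_nonneg _)]
  have hprod : ‖RL h‖ * ‖RL k‖ ≤ lmax * (‖h‖ * ‖k‖) := by
    calc ‖RL h‖ * ‖RL k‖ ≤ (Real.sqrt lmax * ‖h‖) * (Real.sqrt lmax * ‖k‖) :=
          mul_le_mul hnh hnk (norm_nonneg _) (by positivity)
      _ = (Real.sqrt lmax * Real.sqrt lmax) * (‖h‖ * ‖k‖) := by ring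
      _ = lmax * (‖h‖ * ‖k‖) := by rw [Real.mul_self_sqrt hlm.le]
  have hFE : (3*⟪u,AL S v⟫*⟪AL S u,h⟫*⟪AL S u,k⟫ / ⟪u,AL S u⟫
      - (⟪AL S u,h⟫*⟪AL S v,k⟫ + ⟪AL S v,h⟫*⟪AL S u,k⟫ + ⟪u,AL S v⟫*⟪AL S h,k⟫))
      / (Real.sqrt ⟪v,AL S v⟫ * Real.sqrt ⟪u,AL S u⟫ ^ 3)
      = -(((Real.sqrt ⟪v,AL S v⟫)⁻¹ * ⟪AL S v, k⟫)*((Real.sqrt ⟪u,AL S u⟫)⁻¹ * ⟪AL S u, h⟫)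
        + ((Real.sqrt ⟪v,AL S v⟫)⁻¹ * ⟪AL S v, h⟫)*((Real.sqrt ⟪u,AL S u⟫)⁻¹ * ⟪AL S u, k⟫)
        + ((Real.sqrt ⟪u,AL S u⟫)⁻¹ * ((Real.sqrt ⟪v,AL S v⟫)⁻¹ * ⟪u,AL S v⟫))*⟪AL S h,k⟫
        - 3*(((Real.sqrt ⟪u,AL S u⟫)⁻¹ * ((Real.sqrt ⟪v,AL S v⟫)⁻¹ * ⟪u,AL S v⟫))
            *(((Real.sqrt ⟪u,AL S u⟫)⁻¹ * ⟪AL S u, k⟫)*((Real.sqrt ⟪u,AL S u⟫)⁻¹ * ⟪AL S u, h⟫))))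
        / ⟪u,AL S u⟫ := by
    set auh : ℝ := ⟪AL S u, h⟫
    set avh : ℝ := ⟪AL S v, h⟫
    set auk : ℝ := ⟪AL S u, k⟫
    set avk : ℝ := ⟪AL S v, k⟫
    set xuv : ℝ := ⟪u, AL S v⟫
    set ahk : ℝ := ⟪AL S h, k⟫
    set qu : ℝ := ⟪u, AL S u⟫ with hqu2
    set qv : ℝ := ⟪v, AL S v⟫ with hqv2
    have e1 : Real.sqrt qu * Real.sqrt qu = qu := Real.mul_self_sqrt hqu.le
    set sw : ℝ := Real.sqrt qu
    set sv : ℝ := Real.sqrt qv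
    have hsw : sw ≠ 0 := hru.ne'
    have hsv : sv ≠ 0 := hrv.ne'
    rw [← e1]
    field_simp
    ring
  rw [hFE, abs_div, abs_neg, abs_of_pos hqu]
  have h9 : |((Real.sqrt ⟪v,AL S v⟫)⁻¹ * ⟪AL S v, k⟫)*((Real.sqrt ⟪u,AL S u⟫)⁻¹ * ⟪AL S u, h⟫)
        + ((Real.sqrt ⟪v,AL S v⟫)⁻¹ * ⟪AL S v, h⟫)*((Real.sqrt ⟪u,AL S u⟫)⁻¹ * ⟪AL S u, k⟫)
        + ((Real.sqrt ⟪u,AL S u⟫)⁻¹ * ((Real.sqrt ⟪v,AL S v⟫)⁻¹ * ⟪u,AL S v⟫))*⟪AL S h,k⟫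
        - 3*(((Real.sqrt ⟪u,AL S u⟫)⁻¹ * ((Real.sqrt ⟪v,AL S v⟫)⁻¹ * ⟪u,AL S v⟫))
            *(((Real.sqrt ⟪u,AL S u⟫)⁻¹ * ⟪AL S u, k⟫)*((Real.sqrt ⟪u,AL S u⟫)⁻¹ * ⟪AL S u, h⟫)))|
      ≤ 2/Real.sqrt 3 * (lmax * (‖h‖ * ‖k‖)) :=
    key.trans (mul_le_mul_of_nonneg_left hprod (by positivity))
  calc _ ≤ (2/Real.sqrt 3 * (lmax * (‖h‖ * ‖k‖))) / ⟪u,AL S u⟫ := by gcongr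
    _ = 2/Real.sqrt 3 * lmax / ⟪u,AL S u⟫ * (‖h‖ * ‖k‖) := by ring

/-- The (ℓ²→ℓ²) operator norm of the Hessian of `u ↦ cos_Σ(u,v)`
at a nonzero point `u` is at most `(2/√3) · λ_max / ‖u‖_Σ²`, where `λ_max` is the
largest eigenvalue of the positive definite matrix `Σ`. -/
theorem hessian_matCos_opNorm (S : Matrix (Fin d) (Fin d) ℝ) (hS : S.PosDef)
    (lmax : ℝ) (hmax : ∀ x : EuclideanSpace ℝ (Fin d), sInner S x x ≤ lmax * ‖x‖ ^ 2)
    (u v : EuclideanSpace ℝ (Fin d)) (hu : u ≠ 0) (hv : v ≠ 0) :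
    ‖fderiv ℝ (fderiv ℝ (fun w => sCos S w v)) u‖ ≤
      (2 / Real.sqrt 3) * lmax / (sNorm S u) ^ 2 := by
  classical
  have hsym : ∀ x y : EuclideanSpace ℝ (Fin d), ⟪AL S x, y⟫ = ⟪x, AL S y⟫ :=
    fun x y => (Matrix.isHermitian_iff_isSymmetric.mp hS.1) x y
  have hpos : ∀ z : EuclideanSpace ℝ (Fin d), z ≠ 0 → 0 < ⟪z, AL S z⟫ := by
    intro z hz
    have h0 : ⟪z, AL S z⟫ = dotProduct (star (WithLp.equiv 2 _ z)) (S *ᵥ (WithLp.equiv 2 _ z)) := by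
      simp [AL, Matrix.toEuclideanLin_apply, PiLp.inner_apply, dotProduct, mulVec, mul_comm]
    rw [h0]
    exact hS.dotProduct_mulVec_pos (by simpa using hz)
  have hmax' : ∀ x : EuclideanSpace ℝ (Fin d), ⟪x, AL S x⟫ ≤ lmax * ‖x‖^2 := fun x => hmax x
  have hqu : 0 < ⟪u, AL S u⟫ := hpos u hu
  have hlm : 0 < lmax := by
    have h1 := hmax' u
    have h2 : (0:ℝ) < ‖u‖^2 := by
      have := norm_pos_iff.mpr hu
      positivity
    nlinarith
  obtain ⟨H, hH, hHval⟩ := hasFDerivAt_Dmap S hsym hpos v hv u hu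
  have hev : fderiv ℝ (fun w => sCos S w v) =ᶠ[nhds u] Dmap S v := by
    filter_upwards [IsOpen.mem_nhds isOpen_compl_singleton hu] with w hw
    exact (hasFDerivAt_sCos S hsym hpos v hv w hw).fderiv
  have h2 : fderiv ℝ (fderiv ℝ (fun w => sCos S w v)) u = H := by
    rw [hev.fderiv_eq, hH.fderiv]
  rw [h2]
  have hsn : (sNorm S u)^2 = ⟪u, AL S u⟫ := Real.sq_sqrt (le_of_lt hqu)
  rw [hsn]
  have hC : 0 ≤ 2/Real.sqrt 3 * lmax / ⟪u, AL S u⟫ := by positivity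
  apply ContinuousLinearMap.opNorm_le_bound _ hC
  intro h
  apply ContinuousLinearMap.opNorm_le_bound _ (by positivity)
  intro k
  rw [hHval h k, Real.norm_eq_abs]
  calc |(3*⟪u,AL S v⟫*⟪AL S u,h⟫*⟪AL S u,k⟫ / ⟪u,AL S u⟫
      - (⟪AL S u,h⟫*⟪AL S v,k⟫ + ⟪AL S v,h⟫*⟪AL S u,k⟫ + ⟪u,AL S v⟫*⟪AL S h,k⟫))
      / (Real.sqrt ⟪v,AL S v⟫ * Real.sqrt ⟪u,AL S u⟫ ^ 3)|
      ≤ 2/Real.sqrt 3 * lmax / ⟪u,AL S u⟫ * (‖h‖ * ‖k‖) :=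
        scalar_bound S hS lmax hmax' u v h k hu hv
    _ = 2/Real.sqrt 3 * lmax / ⟪u,AL S u⟫ * ‖h‖ * ‖k‖ := by ring
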